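/- With φ_a(z) = ₁φ₁(0; qa; q, z) and ψ_a(z) = ₁φ₁(0; q a^{-1}; q, a^{-1} z), for all a with q < a < q^{-1}, a ≠ 1, and all z ∈ ℂ: φ_a(z) ψ_a(qz) − a ψ_a(z) φ_a(qz) = 1 − a. -/

import Mathlib

open Finset Filter Topology

/-- Finite q-Pochhammer symbol `(z;q)_k = ∏_{j<k} (1 - z qʲ)`. -/
noncomputable def qPoch (z q : ℂ) (k : ℕ) : ℂ := ∏ j ∈ range k, (1 - z * q ^ j)

/-- Basic confluent hypergeometric series
`₁φ₁(0;b;q,z) = ∑ₖ (-1)ᵏ q^{k(k-1)/2} zᵏ / ((b;q)ₖ (q;q)ₖ)`. -/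
noncomputable def phi11 (b q z : ℂ) : ℂ :=
  ∑' k : ℕ, (-1) ^ k * q ^ (k * (k - 1) / 2 : ℕ) * z ^ k / (qPoch b q k * qPoch q q k)

noncomputable def qc (b q : ℂ) (k : ℕ) : ℂ :=
  (-1) ^ k * q ^ (k * (k - 1) / 2 : ℕ) / (qPoch b q k * qPoch q q k)

lemma phi11_eq_tsum (b q z : ℂ) : phi11 b q z = ∑' k : ℕ, qc b q k * z ^ k := by
  unfold phi11 qc
  exact tsum_congr fun k => by ring

lemma tri (k : ℕ) : (k+1) * ((k+1) - 1) / 2 = k * (k-1)/2 + k := by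
  cases k with
  | zero => rfl
  | succ m =>
      have h : (m+1+1) * (m+1+1-1) = (m+1) * (m+1-1) + (m+1) * 2 := by
        simp only [Nat.add_sub_cancel]; ring
      rw [h, Nat.add_mul_div_right _ _ (by norm_num : 0 < 2)]

lemma qPoch_ofReal (r q : ℝ) (k : ℕ) :
    qPoch (r:ℂ) (q:ℂ) k = ((∏ j ∈ range k, (1 - r * q ^ j) : ℝ) : ℂ) := by
  unfold qPoch; push_cast; rfl

lemma prodR_pos {r q : ℝ} (hr0 : 0 ≤ r) (hr1 : r < 1) (hq0 : 0 ≤ q) (hq1 : q ≤ 1) (k : ℕ) :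
    0 < ∏ j ∈ range k, (1 - r * q ^ j) :=
  Finset.prod_pos fun j _ => by nlinarith [pow_le_one₀ hq0 hq1 (n := j), pow_nonneg hq0 j]

lemma prodR_ge {r q : ℝ} (hr0 : 0 ≤ r) (hr1 : r < 1) (hq0 : 0 ≤ q) (hq1 : q ≤ 1) (k : ℕ) :
    (1 - r)^k ≤ ∏ j ∈ range k, (1 - r * q ^ j) := by
  have : (1-r)^k = ∏ _j ∈ range k, (1-r) := by rw [Finset.prod_const, Finset.card_range]
  rw [this]
  refine Finset.prod_le_prod (fun j _ => by linarith) (fun j _ => ?_)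
  nlinarith [pow_le_one₀ hq0 hq1 (n := j), pow_nonneg hq0 j]

lemma qc_term_norm_le {r q : ℝ} (hr0 : 0 < r) (hr1 : r < 1) (hq0 : 0 < q) (hq1 : q < 1)
    {z : ℂ} {M : ℝ} (hz : ‖z‖ ≤ M) (k : ℕ) :
    ‖qc (r:ℂ) (q:ℂ) k * z ^ k‖ ≤ q ^ (k*(k-1)/2) * ((M+1) / ((1-r)*(1-q)))^k := by
  set Pb : ℝ := ∏ j ∈ range k, (1 - r * q ^ j) with hPb
  set Pq : ℝ := ∏ j ∈ range k, (1 - q * q ^ j) with hPq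
  have hPbpos : 0 < Pb := prodR_pos hr0.le hr1 hq0.le hq1.le k
  have hPqpos : 0 < Pq := prodR_pos hq0.le hq1 hq0.le hq1.le k
  have hcast : qc (r:ℂ) (q:ℂ) k = (-1)^k * ((q ^ (k*(k-1)/2) / (Pb * Pq) : ℝ) : ℂ) := by
    unfold qc
    rw [qPoch_ofReal, qPoch_ofReal, ← hPb, ← hPq]
    push_cast
    ring
  have hnorm : ‖qc (r:ℂ) (q:ℂ) k * z ^ k‖
      = q ^ (k*(k-1)/2) / (Pb * Pq) * ‖z‖^k := by
    rw [hcast, norm_mul, norm_mul, norm_pow, norm_pow, norm_neg, norm_one, one_pow, one_mul,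
        Complex.norm_real, Real.norm_eq_abs, abs_of_pos (by positivity)]
  rw [hnorm]
  have h1 : (0:ℝ) < 1 - r := by linarith
  have h2 : (0:ℝ) < 1 - q := by linarith
  have hdpos : (0:ℝ) < (1-r)^k*(1-q)^k := by positivity
  have hd1 : (1-r)^k*(1-q)^k ≤ Pb*Pq :=
    mul_le_mul (prodR_ge hr0.le hr1 hq0.le hq1.le k) (prodR_ge hq0.le hq1 hq0.le hq1.le k)
      (pow_nonneg h2.le k) hPbpos.le
  have hq2 : q ^ (k*(k-1)/2)/(Pb*Pq) ≤ q ^ (k*(k-1)/2)/((1-r)^k*(1-q)^k) :=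
    div_le_div_of_nonneg_left (by positivity) hdpos hd1
  have hz' : ‖z‖^k ≤ (M+1)^k := pow_le_pow_left₀ (norm_nonneg z) (by linarith) k
  calc q ^ (k*(k-1)/2)/(Pb*Pq) * ‖z‖^k
      ≤ q ^ (k*(k-1)/2)/((1-r)^k*(1-q)^k) * (M+1)^k :=
        mul_le_mul hq2 hz' (pow_nonneg (norm_nonneg z) k) (by positivity)
    _ = q ^ (k*(k-1)/2) * ((M+1)/((1-r)*(1-q)))^k := by
        rw [div_pow, mul_pow]; ring

lemma bound_summable {q : ℝ} (hq0 : 0 < q) (hq1 : q < 1) {R : ℝ} (hR : 0 < R) :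
    Summable (fun k : ℕ => q ^ (k*(k-1)/2) * R ^ k) := by
  apply summable_of_ratio_norm_eventually_le (r := 1/2) (by norm_num)
  have h : Tendsto (fun k : ℕ => q ^ k * R) atTop (𝓝 0) := by
    simpa using (tendsto_pow_atTop_nhds_zero_of_lt_one hq0.le hq1).mul_const R
  filter_upwards [h.eventually_lt_const (by norm_num : (0:ℝ) < 1/2)] with k hk
  have hg : q ^ ((k+1)*((k+1)-1)/2) * R^(k+1) = (q^k * R) * (q^(k*(k-1)/2) * R^k) := by
    rw [tri, pow_add]; ring
  rw [Real.norm_eq_abs, Real.norm_eq_abs, abs_of_nonneg (by positivity),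
      abs_of_nonneg (by positivity), hg]
  exact mul_le_mul_of_nonneg_right hk.le (by positivity)

lemma summable_qc {r q : ℝ} (hr0 : 0 < r) (hr1 : r < 1) (hq0 : 0 < q) (hq1 : q < 1) (z : ℂ) :
    Summable (fun k : ℕ => qc (r:ℂ) (q:ℂ) k * z ^ k) :=
  Summable.of_norm_bounded
    (bound_summable hq0 hq1 (div_pos (by positivity) (mul_pos (by linarith) (by linarith))))
    (fun k => qc_term_norm_le hr0 hr1 hq0 hq1 le_rfl k)

lemma qc_zero (b q : ℂ) : qc b q 0 = 1 := by
  unfold qc qPoch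
  simp

lemma tendsto_phi11 {r q : ℝ} (hr0 : 0 < r) (hr1 : r < 1) (hq0 : 0 < q) (hq1 : q < 1)
    (w : ℂ) :
    Tendsto (fun n : ℕ => phi11 (r:ℂ) (q:ℂ) ((q:ℂ)^n * w)) atTop (𝓝 1) := by
  have hlim : (∑' k : ℕ, qc (r:ℂ) (q:ℂ) k * ((0:ℂ)*w)^k) = 1 := by
    rw [tsum_eq_single 0 (fun k hk => by simp [zero_pow hk])]
    simp [qc_zero]
  have key : Tendsto (fun n : ℕ => ∑' k : ℕ, qc (r:ℂ) (q:ℂ) k * ((q:ℂ)^n * w)^k) atTop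
      (𝓝 (∑' k : ℕ, qc (r:ℂ) (q:ℂ) k * ((0:ℂ)*w)^k)) := by
    apply tendsto_tsum_of_dominated_convergence
      (bound := fun k => q^(k*(k-1)/2) * ((‖w‖+1)/((1-r)*(1-q)))^k)
    · exact bound_summable hq0 hq1 (div_pos (by positivity) (mul_pos (by linarith) (by linarith)))
    · intro k
      have hq' : Tendsto (fun n : ℕ => ((q:ℂ))^n) atTop (𝓝 0) := by
        apply tendsto_pow_atTop_nhds_zero_of_norm_lt_one
        rw [Complex.norm_real, Real.norm_eq_abs, abs_of_pos hq0]
        exact hq1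
      exact (((hq'.mul_const w)).pow k).const_mul _
    · filter_upwards with n k
      refine qc_term_norm_le hr0 hr1 hq0 hq1 ?_ k
      rw [norm_mul, norm_pow, Complex.norm_real, Real.norm_eq_abs, abs_of_pos hq0]
      calc q^n * ‖w‖ ≤ 1 * ‖w‖ := by
            have := pow_le_one₀ hq0.le hq1.le (n := n)
            have := norm_nonneg w
            nlinarith
        _ = ‖w‖ := one_mul _
  rw [hlim] at key
  refine key.congr fun n => ?_
  rw [phi11_eq_tsum]

lemma qPoch_ne_zero {r q : ℝ} (hr0 : 0 < r) (hr1 : r < 1) (hq0 : 0 < q) (hq1 : q < 1)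
    (k : ℕ) : qPoch (r:ℂ) (q:ℂ) k ≠ 0 := by
  rw [qPoch_ofReal]
  exact_mod_cast (prodR_pos hr0.le hr1 hq0.le hq1.le k).ne'

lemma phi11_rec {r q : ℝ} (hr0 : 0 < r) (hr1 : r < 1) (hq0 : 0 < q) (hq1 : q < 1)
    (ρ : ℂ) (hρ : (r:ℂ) = (q:ℂ) * ρ) (z : ℂ) :
    phi11 (r:ℂ) (q:ℂ) z + (z - 1 - ρ) * phi11 (r:ℂ) (q:ℂ) ((q:ℂ)*z)
      + ρ * phi11 (r:ℂ) (q:ℂ) ((q:ℂ)^2*z) = 0 := by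
  set e : ℕ → ℂ := fun k => qc (r:ℂ) (q:ℂ) k * (1 - (1+ρ)*(q:ℂ)^k + ρ*((q:ℂ)^k)^2) * z^k
    with he
  set m : ℕ → ℂ := fun k => qc (r:ℂ) (q:ℂ) k * (q:ℂ)^k * z^(k+1) with hm
  have S1 := summable_qc hr0 hr1 hq0 hq1 z
  have S2 := summable_qc hr0 hr1 hq0 hq1 ((q:ℂ)*z)
  have S3 := summable_qc hr0 hr1 hq0 hq1 ((q:ℂ)^2*z)
  have Sm : Summable m := by
    refine (S2.mul_left z).congr fun k => ?_
    simp only [hm, mul_pow]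
    ring
  have Se : Summable e := by
    refine ((S1.sub (S2.mul_left (1+ρ))).add (S3.mul_left ρ)).congr fun k => ?_
    simp only [he, mul_pow]
    rw [show ((q:ℂ)^2)^k = ((q:ℂ)^k)^2 by rw [← pow_mul, ← pow_mul, mul_comm]]
    ring
  have key : ∀ k, e (k+1) = - m k := by
    intro k
    have hA := qPoch_ne_zero hr0 hr1 hq0 hq1 k
    have hB := qPoch_ne_zero hq0 hq1 hq0 hq1 k
    have hposa : (0:ℝ) < 1 - r * q^k := by
      nlinarith [pow_le_one₀ hq0.le hq1.le (n := k), pow_nonneg hq0.le k]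
    have hposb : (0:ℝ) < 1 - q * q^k := by
      nlinarith [pow_le_one₀ hq0.le hq1.le (n := k), pow_nonneg hq0.le k]
    have hfa : (1 - (r:ℂ) * (q:ℂ)^k) ≠ 0 := by
      rw [show (1:ℂ) - (r:ℝ) * (q:ℝ)^k = ((1 - r * q^k : ℝ) : ℂ) by push_cast; ring]
      exact_mod_cast hposa.ne'
    have hfb : (1 - (q:ℂ) * (q:ℂ)^k) ≠ 0 := by
      rw [show (1:ℂ) - (q:ℝ) * (q:ℝ)^k = ((1 - q * q^k : ℝ) : ℂ) by push_cast; ring]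
      exact_mod_cast hposb.ne'
    have hsa : qPoch (r:ℂ) (q:ℂ) (k+1) = qPoch (r:ℂ) (q:ℂ) k * (1 - (r:ℂ) * (q:ℂ)^k) :=
      Finset.prod_range_succ _ k
    have hsb : qPoch (q:ℂ) (q:ℂ) (k+1) = qPoch (q:ℂ) (q:ℂ) k * (1 - (q:ℂ) * (q:ℂ)^k) :=
      Finset.prod_range_succ _ k
    have crec : qc (r:ℂ) (q:ℂ) (k+1) * ((1 - (r:ℂ)*(q:ℂ)^k) * (1 - (q:ℂ)*(q:ℂ)^k))
        = - ((q:ℂ)^k) * qc (r:ℂ) (q:ℂ) k := by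
      unfold qc
      rw [tri, pow_add, hsa, hsb]
      field_simp
      linear_combination (-((q:ℂ)^k * (q:ℂ)^(k*(k-1)/2))) * mul_inv_cancel₀ hfb
    have hfac : (1 - (1+ρ)*(q:ℂ)^(k+1) + ρ*((q:ℂ)^(k+1))^2)
        = (1 - (r:ℂ)*(q:ℂ)^k) * (1 - (q:ℂ)*(q:ℂ)^k) := by
      rw [hρ]; ring
    simp only [he, hm]
    rw [hfac, crec]
    ring
  have hsplit : ∀ k, qc (r:ℂ) (q:ℂ) k * z^k + (z - 1 - ρ) * (qc (r:ℂ) (q:ℂ) k * ((q:ℂ)*z)^k)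
      + ρ * (qc (r:ℂ) (q:ℂ) k * ((q:ℂ)^2*z)^k) = e k + m k := by
    intro k
    simp only [he, hm, mul_pow]
    rw [show ((q:ℂ)^2)^k = ((q:ℂ)^k)^2 by rw [← pow_mul, ← pow_mul, mul_comm]]
    ring
  rw [phi11_eq_tsum, phi11_eq_tsum, phi11_eq_tsum,
      ← tsum_mul_left (a := z - 1 - ρ), ← tsum_mul_left (a := ρ),
      ← Summable.tsum_add S1 (S2.mul_left _),
      ← Summable.tsum_add (S1.add (S2.mul_left _)) (S3.mul_left _),
      tsum_congr hsplit, Summable.tsum_add Se Sm, Summable.tsum_eq_zero_add Se]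
  have he0 : e 0 = 0 := by
    simp only [he]
    simp [qc_zero]
  have hshift : (∑' k : ℕ, e (k+1)) = ∑' k : ℕ, -(m k) := tsum_congr fun k => key k
  rw [he0, zero_add, hshift, tsum_neg]
  ring

/-- Wronskian-type identity: with `φ_a(z) = ₁φ₁(0;qa;q,z)` and
`ψ_a(z) = ₁φ₁(0;qa⁻¹;q,a⁻¹z)`, one has
`φ_a(z) ψ_a(qz) − a ψ_a(z) φ_a(qz) = 1 − a` for `q < a < q⁻¹`, `a ≠ 1`. -/
theorem stmt9 (a q : ℝ) (hq0 : 0 < q) (hq1 : q < 1)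
    (haq : q < a) (haq' : a < q⁻¹) (ha1 : a ≠ 1)
    (φ ψ : ℂ → ℂ)
    (hφ : ∀ z : ℂ, φ z = phi11 ((q : ℂ) * a) q z)
    (hψ : ∀ z : ℂ, ψ z = phi11 ((q : ℂ) * (a : ℂ)⁻¹) q ((a : ℂ)⁻¹ * z))
    (z : ℂ) :
    φ z * ψ ((q : ℂ) * z) - (a : ℂ) * ψ z * φ ((q : ℂ) * z) = 1 - (a : ℂ) := by
  have ha0 : 0 < a := lt_trans hq0 haq
  have haC : (a:ℂ) ≠ 0 := by exact_mod_cast ha0.ne'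
  have hb10 : 0 < q * a := mul_pos hq0 ha0
  have hb11 : q * a < 1 := by
    have := mul_lt_mul_of_pos_left haq' hq0
    rwa [mul_inv_cancel₀ hq0.ne'] at this
  have hb20 : 0 < q / a := div_pos hq0 ha0
  have hb21 : q / a < 1 := (div_lt_one ha0).mpr haq
  have hρ1 : ((q*a : ℝ) : ℂ) = (q:ℂ) * (a:ℂ) := by push_cast; ring
  have hρ2 : ((q/a : ℝ) : ℂ) = (q:ℂ) * (a:ℂ)⁻¹ := by push_cast; ring
  have hrec1 : ∀ w : ℂ, φ w + (w - 1 - (a:ℂ)) * φ ((q:ℂ)*w) + (a:ℂ) * φ ((q:ℂ)^2*w) = 0 := by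
    intro w
    have h := phi11_rec hb10 hb11 hq0 hq1 ((a:ℂ)) hρ1 w
    rw [hρ1] at h
    rw [hφ, hφ, hφ]
    exact h
  have hrec2 : ∀ w : ℂ, (a:ℂ) * ψ w + (w - (a:ℂ) - 1) * ψ ((q:ℂ)*w) + ψ ((q:ℂ)^2*w) = 0 := by
    intro w
    have h := phi11_rec hb20 hb21 hq0 hq1 ((a:ℂ))⁻¹ hρ2 ((a:ℂ)⁻¹ * w)
    rw [hρ2] at h
    rw [show (q:ℂ)*((a:ℂ)⁻¹*w) = (a:ℂ)⁻¹*((q:ℂ)*w) by ring,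
        show ((q:ℂ))^2*((a:ℂ)⁻¹*w) = (a:ℂ)⁻¹*((q:ℂ)^2*w) by ring] at h
    rw [hψ, hψ, hψ]
    have key : (a:ℂ) * (a:ℂ)⁻¹ = 1 := mul_inv_cancel₀ haC
    linear_combination (a:ℂ) * h
      - ((w - 1) * phi11 ((q:ℂ)*(a:ℂ)⁻¹) (q:ℂ) ((a:ℂ)⁻¹*((q:ℂ)*w))
        + phi11 ((q:ℂ)*(a:ℂ)⁻¹) (q:ℂ) ((a:ℂ)⁻¹*((q:ℂ)^2*w))) * key
  have hstep : ∀ w : ℂ, φ ((q:ℂ)*w) * ψ ((q:ℂ)*((q:ℂ)*w)) - (a:ℂ) * ψ ((q:ℂ)*w) * φ ((q:ℂ)*((q:ℂ)*w))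
      = φ w * ψ ((q:ℂ)*w) - (a:ℂ) * ψ w * φ ((q:ℂ)*w) := by
    intro w
    have h1 := hrec1 w
    have h2 := hrec2 w
    rw [show (q:ℂ)*((q:ℂ)*w) = (q:ℂ)^2*w by ring]
    linear_combination φ ((q:ℂ)*w) * h2 - ψ ((q:ℂ)*w) * h1
  have hiter : ∀ n : ℕ, φ ((q:ℂ)^n*z) * ψ ((q:ℂ)*((q:ℂ)^n*z)) - (a:ℂ) * ψ ((q:ℂ)^n*z) * φ ((q:ℂ)*((q:ℂ)^n*z))
      = φ z * ψ ((q:ℂ)*z) - (a:ℂ) * ψ z * φ ((q:ℂ)*z) := by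
    intro n
    induction n with
    | zero => norm_num
    | succ n ih =>
        rw [show ((q:ℂ))^(n+1)*z = (q:ℂ)*((q:ℂ)^n*z) by ring, hstep ((q:ℂ)^n*z)]
        exact ih
  have T1 : Filter.Tendsto (fun n : ℕ => φ ((q:ℂ)^n*z)) Filter.atTop (nhds 1) := by
    have base := tendsto_phi11 hb10 hb11 hq0 hq1 z
    simp only [hρ1] at base
    exact base.congr fun n => (hφ _).symm
  have T4 : Filter.Tendsto (fun n : ℕ => φ ((q:ℂ)*((q:ℂ)^n*z))) Filter.atTop (nhds 1) := by
    have base := tendsto_phi11 hb10 hb11 hq0 hq1 ((q:ℂ)*z)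
    simp only [hρ1] at base
    refine base.congr fun n => ?_
    rw [hφ]
    congr 1
    ring
  have T3 : Filter.Tendsto (fun n : ℕ => ψ ((q:ℂ)^n*z)) Filter.atTop (nhds 1) := by
    have base := tendsto_phi11 hb20 hb21 hq0 hq1 ((a:ℂ)⁻¹*z)
    simp only [hρ2] at base
    refine base.congr fun n => ?_
    rw [hψ]
    congr 1
    ring
  have T2 : Filter.Tendsto (fun n : ℕ => ψ ((q:ℂ)*((q:ℂ)^n*z))) Filter.atTop (nhds 1) := by
    have base := tendsto_phi11 hb20 hb21 hq0 hq1 ((a:ℂ)⁻¹*((q:ℂ)*z))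
    simp only [hρ2] at base
    refine base.congr fun n => ?_
    rw [hψ]
    congr 1
    ring
  have Tall : Filter.Tendsto (fun n : ℕ => φ ((q:ℂ)^n*z) * ψ ((q:ℂ)*((q:ℂ)^n*z))
      - (a:ℂ) * ψ ((q:ℂ)^n*z) * φ ((q:ℂ)*((q:ℂ)^n*z))) Filter.atTop
      (nhds (1*1 - (a:ℂ)*1*1)) :=
    (T1.mul T2).sub ((tendsto_const_nhds.mul T3).mul T4)
  have hconst : Filter.Tendsto (fun _ : ℕ => φ z * ψ ((q:ℂ)*z) - (a:ℂ) * ψ z * φ ((q:ℂ)*z))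
      Filter.atTop (nhds (φ z * ψ ((q:ℂ)*z) - (a:ℂ) * ψ z * φ ((q:ℂ)*z))) := tendsto_const_nhds
  have := tendsto_nhds_unique (hconst.congr fun n => (hiter n).symm) Tall
  rw [this]
  ring
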